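/- Let N ≥ 2. If (X, Y') ~ G', then E[φ_{i≠j}(X, Y')] = ε²·(2 − 2/N). -/

import Mathlib

open MeasureTheory ProbabilityTheory Finset
open scoped NNReal ENNReal

noncomputable section

/-- Bit strings of length `n`; there are `N = 2^n` of them. -/
abbrev BV (n : ℕ) := Fin n → Bool

/-- Inner product (mod nothing, just the count) of two bit strings. -/
def bip {n : ℕ} (x y : BV n) : ℕ := (Finset.univ.filter fun i => x i && y i).card

/-- The `N × N` normalized Walsh-Hadamard matrix, `H_{x,y} = (-1)^{⟨x,y⟩} / √N`. -/
def Had (n : ℕ) : Matrix (BV n) (BV n) ℝ :=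
  Matrix.of fun x y => (-1 : ℝ) ^ bip x y / Real.sqrt (2 ^ n)

/-- `ε = 1 / (C ln N)` with `N = 2^n`. -/
def eps (C : ℝ) (n : ℕ) : ℝ := 1 / (C * Real.log (2 ^ n))

/-- The Gaussian vector `X` with i.i.d. `N(0, ε)` coordinates. -/
def gaussVec (C : ℝ) (n : ℕ) : Measure (BV n → ℝ) :=
  Measure.pi fun _ => gaussianReal 0 (eps C n).toNNReal

/-- The distribution `G'` of `Z = (X, Y∘Y - ε·𝟙)` with `Y = H·X`, packed as a
function on `BV n ⊕ BV n` (first `N` coordinates are `X`, last `N` are `Y∘Y - ε`). -/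
def Gmeas' (C : ℝ) (n : ℕ) : Measure (BV n ⊕ BV n → ℝ) :=
  (gaussVec C n).map fun X => Sum.elim X fun i => ((Had n).mulVec X i) ^ 2 - eps C n

/-- Truncation to `[-1, 1]`. -/
def trnc (a : ℝ) : ℝ := min 1 (max (-1) a)

/-- Randomized rounding of `a` to `±1`: output `1` with probability `(1 + trnc a)/2`
and `-1` with probability `(1 - trnc a)/2`. -/
def roundM (a : ℝ) : Measure ℝ :=
  ((1 + trnc a) / 2).toNNReal • Measure.dirac 1 +
    ((1 - trnc a) / 2).toNNReal • Measure.dirac (-1)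

/-- The distribution `D` on `{±1}^{2N}`: sample `z ~ G'` and round each coordinate
independently. -/
def Dmeas (C : ℝ) (n : ℕ) : Measure (BV n ⊕ BV n → ℝ) :=
  (Gmeas' C n).bind fun z => Measure.pi fun i => roundM (z i)

/-- `F : ℝ^ι → ℝ` is multilinear if `F z = Σ_S F̂(S) ∏_{i ∈ S} z_i`. -/
def IsMultilinear {ι : Type*} [Fintype ι] [DecidableEq ι] (F : (ι → ℝ) → ℝ) : Prop :=
  ∃ c : Finset ι → ℝ, ∀ z, F z = ∑ S : Finset ι, c S * ∏ i ∈ S, z i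

/-- The Fourier coefficient `F̂(S)` of `F` (over the hypercube `{±1}^ι`); for a
multilinear `F` these are precisely its multilinear coefficients. -/
def mlCoeff {ι : Type*} [Fintype ι] [DecidableEq ι] (F : (ι → ℝ) → ℝ) (S : Finset ι) : ℝ :=
  (∑ z : ι → Bool, F (fun i => if z i then 1 else -1) * ∏ i ∈ S, (if z i then (1 : ℝ) else -1)) /
    2 ^ Fintype.card ι

/-- `L_{1,2}(F) = Σ_{|S| = 2} |F̂(S)|`. -/
def L12 {ι : Type*} [Fintype ι] [DecidableEq ι] (F : (ι → ℝ) → ℝ) : ℝ :=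
  ∑ S ∈ Finset.univ.filter (fun S : Finset ι => S.card = 2), |mlCoeff F S|

/-- The restriction `F_ρ` of `F` under `ρ = (S, w)`: coordinates outside `S` are
fixed to the values of `w`. -/
def restrictML {ι : Type*} [DecidableEq ι] (F : (ι → ℝ) → ℝ) (S : Finset ι)
    (w : ι → ℝ) : (ι → ℝ) → ℝ :=
  fun y => F fun i => if i ∈ S then y i else w i

/-- `φ(X, Y) = (1/N) Σ_i (Σ_j H_{ij} X_j)² Y_i`. -/
def phi (n : ℕ) (X Y : BV n → ℝ) : ℝ :=
  (∑ i, ((Had n).mulVec X i) ^ 2 * Y i) / 2 ^ n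

/-- The multilinear part `φ_{i≠j}(X, Y) = (1/N) Σ_i Σ_{j ≠ k} H_{ij} H_{ik} X_j X_k Y_i`. -/
def phiOff (n : ℕ) (X Y : BV n → ℝ) : ℝ :=
  (∑ i, ∑ j, ∑ k ∈ Finset.univ \ {j}, Had n i j * Had n i k * X j * X k * Y i) / 2 ^ n

/-- The Fourier coefficient `f̂(x) = 2^{-n} Σ_y f(y) (-1)^{⟨x,y⟩}` of `f : {0,1}^n → {±1}`. -/
def hatF (n : ℕ) (f : BV n → ℝ) (x : BV n) : ℝ :=
  (∑ y, f y * (-1 : ℝ) ^ bip x y) / 2 ^ n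

section Aux
open Real
open scoped NNReal ENNReal

-- gaussian integral as density integral
lemma gauss_int (v : ℝ≥0) (hv : v ≠ 0) (g : ℝ → ℝ) :
    ∫ x, g x ∂(gaussianReal 0 v) = ∫ x, gaussianPDFReal 0 v x * g x := by
  rw [gaussianReal_of_var_ne_zero _ hv, gaussianPDF_def]
  have : (fun x => ENNReal.ofReal (gaussianPDFReal 0 v x))
      = fun x => ((Real.toNNReal (gaussianPDFReal 0 v x) : ℝ≥0) : ℝ≥0∞) := rfl
  rw [this, integral_withDensity_eq_integral_smul
    ((measurable_gaussianPDFReal 0 v).real_toNNReal) g]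
  congr 1 with x
  simp [NNReal.smul_def, Real.coe_toNNReal _ (gaussianPDFReal_nonneg 0 v x)]

-- pdf is even (mean 0)
lemma gpdf_even (v : ℝ≥0) (x : ℝ) : gaussianPDFReal 0 v (-x) = gaussianPDFReal 0 v x := by
  simp [gaussianPDFReal, neg_sq]

lemma mom_odd (v : ℝ≥0) (hv : v ≠ 0) {k : ℕ} (hk : Odd k) :
    ∫ x, x ^ k ∂(gaussianReal 0 v) = 0 := by
  rw [gauss_int v hv]
  have h := MeasureTheory.integral_neg_eq_self (fun x => gaussianPDFReal 0 v x * x ^ k)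
    (volume : Measure ℝ)
  have heq : ∀ x : ℝ, gaussianPDFReal 0 v (-x) * (-x) ^ k = -(gaussianPDFReal 0 v x * x ^ k) := by
    intro x; rw [gpdf_even, hk.neg_pow]; ring
  simp_rw [heq, integral_neg] at h
  linarith

lemma integrable_pow_mul_gauss {b : ℝ} (hb : 0 < b) (k : ℕ) :
    Integrable (fun x : ℝ => x ^ k * Real.exp (-b * x ^ 2)) := by
  have h := integrable_rpow_mul_exp_neg_mul_sq hb (s := k)
    (by exact_mod_cast lt_of_lt_of_le neg_one_lt_zero (Nat.cast_nonneg k))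
  simpa [Real.rpow_natCast] using h

lemma integrable_pow_gauss (v : ℝ≥0) (hv : v ≠ 0) (k : ℕ) :
    Integrable (fun x => x ^ k) (gaussianReal 0 v) := by
  have hv' : (0:ℝ) < v := by positivity
  have hb : (0:ℝ) < (2 * (v:ℝ))⁻¹ := by positivity
  rw [gaussianReal_of_var_ne_zero _ hv, gaussianPDF_def,
    integrable_withDensity_iff (measurable_gaussianPDFReal 0 v).ennreal_ofReal
      (Filter.Eventually.of_forall fun x => ENNReal.ofReal_lt_top)]
  have : (fun x : ℝ => x ^ k * (ENNReal.ofReal (gaussianPDFReal 0 v x)).toReal)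
      = fun x => (Real.sqrt (2 * Real.pi * v))⁻¹ *
        (x ^ k * Real.exp (-(2 * (v:ℝ))⁻¹ * x ^ 2)) := by
    funext x
    rw [ENNReal.toReal_ofReal (gaussianPDFReal_nonneg 0 v x), gaussianPDFReal]
    have : -(x - 0) ^ 2 / (2 * (v:ℝ)) = -(2 * (v:ℝ))⁻¹ * x ^ 2 := by
      field_simp
      ring
    rw [this]; ring
  rw [this]
  exact (integrable_pow_mul_gauss hb k).const_mul _

lemma mom_two (v : ℝ≥0) (hv : v ≠ 0) : ∫ x, x ^ 2 ∂(gaussianReal 0 v) = v := by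
  have hv' : (0:ℝ) < v := by positivity
  set b : ℝ := (2 * (v:ℝ))⁻¹ with hbdef
  have hb : (0:ℝ) < b := by positivity
  rw [gauss_int v hv]
  have h1 : (fun x : ℝ => gaussianPDFReal 0 v x * x ^ 2)
      = fun x => (Real.sqrt (2 * Real.pi * v))⁻¹ * (x ^ 2 * Real.exp (-b * x ^ 2)) := by
    funext x
    rw [gaussianPDFReal]
    have : -(x - 0) ^ 2 / (2 * (v:ℝ)) = -b * x ^ 2 := by
      rw [hbdef]; field_simp
      ring
    rw [this]; ring
  rw [h1, integral_const_mul]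
  have h2 : ∫ x : ℝ, x ^ 2 * Real.exp (-b * x ^ 2)
      = 2 * ∫ x in Set.Ioi (0:ℝ), x ^ 2 * Real.exp (-b * x ^ 2) := by
    rw [← integral_comp_abs (f := fun x => x ^ 2 * Real.exp (-b * x ^ 2))]
    congr 1 with x
    rw [sq_abs]
  have h3 : ∫ x in Set.Ioi (0:ℝ), x ^ 2 * Real.exp (-b * x ^ 2)
      = b ^ (-(3:ℝ)/2) * (1/2) * Real.Gamma (3/2) := by
    have := integral_rpow_mul_exp_neg_mul_rpow (p := ((2:ℕ):ℝ)) (q := ((2:ℕ):ℝ))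
      (by norm_num) (by norm_num) hb
    simp_rw [Real.rpow_natCast] at this
    rw [this]
    norm_num
  have hgamma : Real.Gamma (3/2) = Real.sqrt Real.pi / 2 := by
    have : (3:ℝ)/2 = 1/2 + 1 := by norm_num
    rw [this, Real.Gamma_add_one (by norm_num), Real.Gamma_one_half_eq]
    ring
  rw [h2, h3, hgamma]
  have hbv : b ^ (-(3:ℝ)/2) = (2 * (v:ℝ)) * Real.sqrt (2 * (v:ℝ)) := by
    rw [hbdef, Real.inv_rpow (by positivity), ← Real.rpow_neg (by positivity),
      neg_div, neg_neg, show (3:ℝ)/2 = 1 + 1/2 by norm_num,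
      Real.rpow_add (by positivity), Real.rpow_one, ← Real.sqrt_eq_rpow]
  rw [hbv]
  have hsplit : Real.sqrt (2 * Real.pi * v) = Real.sqrt (2 * (v:ℝ)) * Real.sqrt Real.pi := by
    rw [show 2 * Real.pi * (v:ℝ) = (2 * v) * Real.pi by ring,
      Real.sqrt_mul (by positivity)]
  rw [hsplit]
  have h2v : Real.sqrt (2 * (v:ℝ)) ≠ 0 := by positivity
  have hpi : Real.sqrt Real.pi ≠ 0 := by positivity
  field_simp

lemma pi_integral_prod {ι : Type*} [Fintype ι] (μ : Measure ℝ) [SigmaFinite μ]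
    (f : ι → ℝ → ℝ) :
    ∫ x : ι → ℝ, ∏ i, f i (x i) ∂(Measure.pi fun _ => μ) = ∏ i, ∫ x, f i x ∂μ := by
  letI : MeasureSpace ℝ := ⟨μ⟩
  exact MeasureTheory.integral_fintype_prod_eq_prod (ι := ι) f

lemma pi_integrable_prod {ι : Type*} [Fintype ι] (μ : Measure ℝ) [SigmaFinite μ]
    {f : ι → ℝ → ℝ} (hf : ∀ i, Integrable (f i) μ) :
    Integrable (fun x : ι → ℝ => ∏ i, f i (x i)) (Measure.pi fun _ => μ) := by
  letI : MeasureSpace ℝ := ⟨μ⟩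
  exact MeasureTheory.Integrable.fintype_prod hf

section Mono
variable {ι : Type*} [Fintype ι] [DecidableEq ι]

def expo4 (j k l m : ι) : ι → ℕ := fun c =>
  (if c = j then 1 else 0) + (if c = k then 1 else 0) +
  (if c = l then 1 else 0) + (if c = m then 1 else 0)

def expo2 (j k : ι) : ι → ℕ := fun c =>
  (if c = j then 1 else 0) + (if c = k then 1 else 0)

lemma prod_pow_single (X : ι → ℝ) (j : ι) :
    ∏ c, X c ^ (if c = j then 1 else 0) = X j := by
  simp [pow_ite, Finset.prod_ite_eq']

lemma mono4_eq (X : ι → ℝ) (j k l m : ι) :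
    X j * X k * (X l * X m) = ∏ c, X c ^ expo4 j k l m c := by
  simp only [expo4, pow_add, Finset.prod_mul_distrib, prod_pow_single]
  ring

lemma mono2_eq (X : ι → ℝ) (j k : ι) :
    X j * X k = ∏ c, X c ^ expo2 j k c := by
  simp only [expo2, pow_add, Finset.prod_mul_distrib, prod_pow_single]

lemma integrable_mono4 (v : ℝ≥0) (hv : v ≠ 0) (j k l m : ι) :
    Integrable (fun X : ι → ℝ => X j * X k * (X l * X m))
      (Measure.pi fun _ => gaussianReal 0 v) := by
  have := pi_integrable_prod (gaussianReal 0 v)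
    (f := fun c (t : ℝ) => t ^ expo4 j k l m c)
    (fun c => integrable_pow_gauss v hv _)
  convert this using 1
  funext X
  exact mono4_eq X j k l m

lemma integrable_mono2 (v : ℝ≥0) (hv : v ≠ 0) (j k : ι) :
    Integrable (fun X : ι → ℝ => X j * X k)
      (Measure.pi fun _ => gaussianReal 0 v) := by
  have := pi_integrable_prod (gaussianReal 0 v)
    (f := fun c (t : ℝ) => t ^ expo2 j k c)
    (fun c => integrable_pow_gauss v hv _)
  convert this using 1
  funext X
  exact mono2_eq X j k

lemma integral_mono2 (v : ℝ≥0) (hv : v ≠ 0) (j k : ι) (hjk : j ≠ k) :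
    ∫ X : ι → ℝ, X j * X k ∂(Measure.pi fun _ => gaussianReal 0 v) = 0 := by
  simp_rw [mono2_eq _ j k]
  rw [pi_integral_prod (gaussianReal 0 v) (fun c (t : ℝ) => t ^ expo2 j k c)]
  refine Finset.prod_eq_zero (Finset.mem_univ j) ?_
  have : expo2 j k j = 1 := by simp [expo2, hjk]
  rw [this]
  exact mom_odd v hv (by decide)

lemma integral_mono4 (v : ℝ≥0) (hv : v ≠ 0) (j k l m : ι) (hjk : j ≠ k) :
    ∫ X : ι → ℝ, X j * X k * (X l * X m) ∂(Measure.pi fun _ => gaussianReal 0 v)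
      = if (l = j ∧ m = k) ∨ (l = k ∧ m = j) then ((v:ℝ))^2 else 0 := by
  simp_rw [mono4_eq _ j k l m]
  rw [pi_integral_prod (gaussianReal 0 v) (fun c (t : ℝ) => t ^ expo4 j k l m c)]
  by_cases h : (l = j ∧ m = k) ∨ (l = k ∧ m = j)
  · rw [if_pos h]
    have he : ∀ c, expo4 j k l m c = (if c = j then 2 else 0) + (if c = k then 2 else 0) := by
      intro c
      rcases h with ⟨hl, hm⟩ | ⟨hl, hm⟩ <;> subst hl <;> subst hm <;>
        simp only [expo4] <;> split_ifs <;> simp_all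
    have hval : ∀ c, (∫ t : ℝ, t ^ expo4 j k l m c ∂(gaussianReal 0 v))
        = (if c = j then (v:ℝ) else 1) * (if c = k then (v:ℝ) else 1) := by
      intro c
      rw [he c]
      by_cases h1 : c = j <;> by_cases h2 : c = k
      · exact absurd (h1.symm.trans h2) hjk
      · subst h1
        simp only [if_pos rfl, if_neg h2, add_zero, mul_one]
        exact mom_two v hv
      · subst h2
        simp only [if_pos rfl, if_neg h1, zero_add, one_mul]
        exact mom_two v hv
      · simp only [if_neg h1, if_neg h2, add_zero, mul_one, pow_zero]
        simp
    rw [Finset.prod_congr rfl (fun c _ => hval c), Finset.prod_mul_distrib]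
    simp [Finset.prod_ite_eq', sq]
  · rw [if_neg h]
    obtain ⟨c, hc⟩ : ∃ c, Odd (expo4 j k l m c) := by
      by_cases h1 : l ≠ j ∧ m ≠ j
      · exact ⟨j, by simp [expo4, hjk, Ne.symm h1.1, Ne.symm h1.2]⟩
      · by_cases h2 : l ≠ k ∧ m ≠ k
        · exact ⟨k, by simp [expo4, Ne.symm hjk, Ne.symm h2.1, Ne.symm h2.2]⟩
        · exfalso
          rcases not_and_or.mp h1 with hl | hm <;> rcases not_and_or.mp h2 with hl' | hm' <;>
            rw [not_not] at *
          · exact hjk (hl ▸ hl'.symm ▸ rfl)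
          · exact h (Or.inl ⟨hl, hm'⟩)
          · exact h (Or.inr ⟨hl', hm⟩)
          · exact hjk (hm ▸ hm'.symm ▸ rfl)
    exact Finset.prod_eq_zero (Finset.mem_univ c) (mom_odd v hv hc)

lemma split_ite {ι : Type*} [DecidableEq ι] (j k l m : ι) (hjk : j ≠ k) (a b : ℝ) :
    a * (if (l = j ∧ m = k) ∨ (l = k ∧ m = j) then b else 0)
    = (if m = k then (if l = j then a * b else 0) else 0)
      + (if m = j then (if l = k then a * b else 0) else 0) := by
  by_cases h1 : l = j <;> by_cases h2 : m = k <;> by_cases h3 : l = k <;>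
    by_cases h4 : m = j <;> simp_all

end Mono

end Aux

/-- Let `N ≥ 2`. If `(X, Y') ~ G'`, then
`E[φ_{i≠j}(X, Y')] = ε² (2 - 2/N)`. -/
theorem stmt3 (C : ℝ) (hC : 20 ≤ C) (n : ℕ) (hn : 1 ≤ n) :
    ∫ z, phiOff n (fun i => z (Sum.inl i)) (fun i => z (Sum.inr i)) ∂(Gmeas' C n)
      = eps C n ^ 2 * (2 - 2 / 2 ^ n) := by
  classical
  have hlog : 0 < Real.log (2 ^ n) := by
    rw [Real.log_pow]
    exact mul_pos (by exact_mod_cast hn) (Real.log_pos (by norm_num))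
  have heps : 0 < eps C n := by
    unfold eps
    exact div_pos one_pos (mul_pos (lt_of_lt_of_le (by norm_num) hC) hlog)
  set v : ℝ≥0 := (eps C n).toNNReal with hvdef
  have hv : v ≠ 0 := by
    simp only [hvdef, ne_eq, Real.toNNReal_eq_zero, not_le]
    exact heps
  have hvr : (v:ℝ) = eps C n := Real.coe_toNNReal _ heps.le
  set μp : Measure (BV n → ℝ) := Measure.pi fun _ => gaussianReal 0 v with hμp
  have hμeq : gaussVec C n = μp := rfl
  -- measurability
  have hHmeas : ∀ i : BV n, Measurable (fun X : BV n → ℝ => (Had n).mulVec X i) := by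
    intro i
    simp only [Matrix.mulVec, dotProduct]
    exact Finset.measurable_sum _ fun j _ => (measurable_pi_apply j).const_mul _
  have hT : Measurable (fun X : BV n → ℝ =>
      Sum.elim X fun i => ((Had n).mulVec X i) ^ 2 - eps C n) := by
    apply measurable_pi_lambda
    intro s
    cases s with
    | inl i => exact measurable_pi_apply i
    | inr i => exact ((hHmeas i).pow_const 2).sub measurable_const
  have hphi : Measurable (fun z : BV n ⊕ BV n → ℝ =>
      phiOff n (fun i => z (Sum.inl i)) (fun i => z (Sum.inr i))) := by
    unfold phiOff
    apply Measurable.div_const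
    refine Finset.measurable_sum _ fun i _ => ?_
    refine Finset.measurable_sum _ fun j _ => ?_
    refine Finset.measurable_sum _ fun k _ => ?_
    exact ((((measurable_const.mul measurable_const).mul
      (measurable_pi_apply (Sum.inl j))).mul (measurable_pi_apply (Sum.inl k))).mul
      (measurable_pi_apply (Sum.inr i)))
  rw [Gmeas', integral_map hT.aemeasurable hphi.aestronglyMeasurable, hμeq]
  simp only [Sum.elim_inl, Sum.elim_inr]
  -- rewrite the integrand
  have hintg : (fun X : BV n → ℝ =>
      phiOff n X (fun i => ((Had n).mulVec X i) ^ 2 - eps C n))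
      = fun X => (∑ i, ∑ j, ∑ k ∈ univ \ {j},
          ((∑ l, ∑ m, (Had n i j * Had n i k * Had n i l * Had n i m) *
              (X j * X k * (X l * X m)))
            - (eps C n * (Had n i j * Had n i k)) * (X j * X k))) / 2 ^ n := by
    funext X
    unfold phiOff
    congr 1
    refine Finset.sum_congr rfl fun i _ => ?_
    refine Finset.sum_congr rfl fun j _ => ?_
    refine Finset.sum_congr rfl fun k _ => ?_
    dsimp only
    have hmv : (Had n).mulVec X i = ∑ l, Had n i l * X l := rfl
    rw [hmv, sq, Finset.sum_mul_sum, mul_sub]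
    congr 1
    · rw [Finset.mul_sum]
      refine Finset.sum_congr rfl fun l _ => ?_
      rw [Finset.mul_sum]
      refine Finset.sum_congr rfl fun m _ => ?_
      ring
    · ring
  rw [hintg]
  rw [integral_div]
  have hint4 : ∀ (a : ℝ) (j k l m : BV n),
      Integrable (fun X : BV n → ℝ => a * (X j * X k * (X l * X m))) μp :=
    fun a j k l m => (integrable_mono4 v hv j k l m).const_mul a
  have hint2 : ∀ (a : ℝ) (j k : BV n),
      Integrable (fun X : BV n → ℝ => a * (X j * X k)) μp :=
    fun a j k => (integrable_mono2 v hv j k).const_mul a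
  have hbr : ∀ i j k : BV n, Integrable (fun X : BV n → ℝ =>
      (∑ l, ∑ m, (Had n i j * Had n i k * Had n i l * Had n i m) * (X j * X k * (X l * X m)))
        - (eps C n * (Had n i j * Had n i k)) * (X j * X k)) μp :=
    fun i j k => ((integrable_finset_sum _ fun l _ => integrable_finset_sum _ fun m _ =>
      hint4 _ _ _ _ _).sub (hint2 _ _ _))
  rw [integral_finset_sum _ (fun i _ => integrable_finset_sum _ fun j _ =>
    integrable_finset_sum _ fun k _ => hbr i j k)]
  have hinner : ∀ i j k : BV n, j ≠ k →
      ∫ X, ((∑ l, ∑ m, (Had n i j * Had n i k * Had n i l * Had n i m) *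
          (X j * X k * (X l * X m)))
        - (eps C n * (Had n i j * Had n i k)) * (X j * X k)) ∂μp
      = 2 * (v:ℝ)^2 * ((Had n i j)^2 * (Had n i k)^2) := by
    intro i j k hjk
    rw [integral_sub (integrable_finset_sum _ fun l _ => integrable_finset_sum _ fun m _ =>
      hint4 _ _ _ _ _) (hint2 _ _ _),
      integral_finset_sum _ (fun l _ => integrable_finset_sum _ fun m _ => hint4 _ _ _ _ _)]
    have h1 : ∀ l : BV n, ∫ X, (∑ m, (Had n i j * Had n i k * Had n i l * Had n i m) *
        (X j * X k * (X l * X m))) ∂μp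
        = ∑ m, (Had n i j * Had n i k * Had n i l * Had n i m) *
          (if (l = j ∧ m = k) ∨ (l = k ∧ m = j) then ((v:ℝ))^2 else 0) := by
      intro l
      rw [integral_finset_sum _ (fun m _ => hint4 _ _ _ _ _)]
      refine Finset.sum_congr rfl fun m _ => ?_
      rw [integral_const_mul, integral_mono4 v hv j k l m hjk]
    rw [integral_const_mul, integral_mono2 v hv j k hjk, mul_zero, sub_zero,
      Finset.sum_congr rfl (fun l _ => h1 l)]
    have hsplit : ∀ l m : BV n,
        (Had n i j * Had n i k * Had n i l * Had n i m) *
          (if (l = j ∧ m = k) ∨ (l = k ∧ m = j) then ((v:ℝ))^2 else 0)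
        = (if m = k then (if l = j then (Had n i j * Had n i k * Had n i l * Had n i m) * ((v:ℝ))^2 else 0) else 0)
          + (if m = j then (if l = k then (Had n i j * Had n i k * Had n i l * Had n i m) * ((v:ℝ))^2 else 0) else 0) :=
      fun l m => split_ite j k l m hjk _ _
    simp only [hsplit, Finset.sum_add_distrib, Finset.sum_ite_eq', Finset.mem_univ, if_true]
    ring
  have hstep : ∀ i : BV n, ∫ X, (∑ j, ∑ k ∈ univ \ {j},
      ((∑ l, ∑ m, (Had n i j * Had n i k * Had n i l * Had n i m) *
          (X j * X k * (X l * X m)))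
        - (eps C n * (Had n i j * Had n i k)) * (X j * X k))) ∂μp
      = ∑ j : BV n, ∑ k ∈ univ \ {j}, 2 * (v:ℝ)^2 * ((Had n i j)^2 * (Had n i k)^2) := by
    intro i
    rw [integral_finset_sum _ (fun j _ => integrable_finset_sum _ fun k _ => hbr i j k)]
    refine Finset.sum_congr rfl fun j _ => ?_
    rw [integral_finset_sum _ (fun k _ => hbr i j k)]
    refine Finset.sum_congr rfl fun k hk => ?_
    have hjk : j ≠ k := by
      rw [Finset.mem_sdiff, Finset.mem_singleton] at hk
      exact fun h => hk.2 h.symm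
    exact hinner i j k hjk
  rw [Finset.sum_congr rfl (fun i _ => hstep i)]
  have hH2 : ∀ i j : BV n, (Had n i j)^2 = 1 / 2^n := by
    intro i j
    show ((-1:ℝ) ^ bip i j / Real.sqrt (2^n))^2 = 1/2^n
    rw [div_pow, ← pow_mul, mul_comm (bip i j) 2, pow_mul, Real.sq_sqrt (by positivity)]
    norm_num
  have hcardU : Fintype.card (BV n) = 2^n := by
    simp [BV]
  have hcard : ∀ j : BV n, (univ \ ({j} : Finset (BV n))).card = 2^n - 1 := by
    intro j
    rw [Finset.card_sdiff_of_subset (Finset.singleton_subset_iff.mpr (Finset.mem_univ j)),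
      Finset.card_singleton, Finset.card_univ, hcardU]
  simp only [hH2, Finset.sum_const, hcard, nsmul_eq_mul, Finset.card_univ, hcardU]
  rw [hvr] at *
  have h2n : (0:ℝ) < 2^n := by positivity
  have hc : ((2^n - 1 : ℕ) : ℝ) = 2^n - 1 := by
    rw [Nat.cast_sub Nat.one_le_two_pow]
    push_cast
    ring
  rw [hc]
  push_cast
  field_simp
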